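/- In the setting of the previous construction, the map sending a function f ∈ Ind_N^G(V) to ∑_{a∈A} a ⊗ f(ι(a)) is an isomorphism of G-representations Ind_N^G(V) ≅ k[A] ⊗ V (with the twisted action defined via ι and γ). -/

import Mathlib

section CliffordDefs

variable {k G V : Type*} [Field k] [Group G] [AddCommGroup V] [Module k V]

/-- The carrier of the induced representation `Ind_H^G V`: functions `f : G → V`
with `f (g * h) = ρ h⁻¹ (f g)` for `h ∈ H`. -/
def indCar (H : Subgroup G) (ρ : Representation k H V) : Submodule k (G → V) where
  carrier := {f | ∀ (g : G) (h : H), f (g * ↑h) = ρ h⁻¹ (f g)}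
  add_mem' := by
    intro f₁ f₂ h₁ h₂ g h
    simp [h₁ g h, h₂ g h]
  zero_mem' := by intro g h; simp
  smul_mem' := by
    intro c f hf g h
    simp [hf g h]

/-- The induced representation of `G` on `indCar H ρ`, given by `(g • f) x = f (g⁻¹ * x)`. -/
def indRep (H : Subgroup G) (ρ : Representation k H V) : Representation k G (indCar H ρ) where
  toFun g :=
    { toFun := fun f => ⟨fun x => (f : G → V) (g⁻¹ * x), by
        intro x h
        show (f : G → V) (g⁻¹ * (x * ↑h)) = ρ h⁻¹ ((f : G → V) (g⁻¹ * x))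
        rw [← mul_assoc]
        exact f.2 (g⁻¹ * x) h⟩
      map_add' := by intro f₁ f₂; ext x; simp
      map_smul' := by intro c f; ext x; simp }
  map_one' := by ext f x; simp
  map_mul' := by intro g₁ g₂; ext f x; simp [mul_assoc]

end CliffordDefs

namespace CliffordAux
variable {k G V : Type*} [Field k] [Group G] [AddCommGroup V] [Module k V]
variable (N : Subgroup G) [N.Normal] (ρ : Representation k N V)
variable (ι : G ⧸ N → G)

omit [N.Normal] in
lemma key (n m : N) (h : (n : G) = m) : ρ n = ρ m := by
  congr 1; exact Subtype.ext h

lemma hmem (hι : ∀ a, QuotientGroup.mk' N (ι a) = a) (y : G) :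
    (ι (QuotientGroup.mk' N y))⁻¹ * y ∈ N := by
  rw [← QuotientGroup.eq_one_iff]
  show (QuotientGroup.mk' N) ((ι (QuotientGroup.mk' N y))⁻¹ * y) = 1
  simp [map_mul, map_inv, hι]

def L : indCar N ρ →ₗ[k] ((G ⧸ N) → V) where
  toFun f := fun a => (f : G → V) (ι a)
  map_add' _ _ := rfl
  map_smul' _ _ := rfl

lemma M_eq (hι : ∀ a, QuotientGroup.mk' N (ι a) = a) (g : G) (h : N)
    (hq : QuotientGroup.mk' N (g * ↑h) = QuotientGroup.mk' N g) :
    ((⟨(ι (QuotientGroup.mk' N (g * ↑h)))⁻¹ * (g * ↑h), hmem N ι hι _⟩⁻¹ : N) : G) =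
      (((⟨(ι (QuotientGroup.mk' N g))⁻¹ * g, hmem N ι hι g⟩ : N) * h)⁻¹ : N) := by
  push_cast
  rw [hq]
  group

def M (hι : ∀ a, QuotientGroup.mk' N (ι a) = a) :
    ((G ⧸ N) → V) →ₗ[k] indCar N ρ where
  toFun F := ⟨fun x => ρ (⟨(ι (QuotientGroup.mk' N x))⁻¹ * x, hmem N ι hι x⟩⁻¹)
      (F (QuotientGroup.mk' N x)), by
    intro g h
    have hq : QuotientGroup.mk' N (g * ↑h) = QuotientGroup.mk' N g := by
      rw [map_mul]
      have : QuotientGroup.mk' N (h : G) = 1 := by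
        rw [QuotientGroup.mk'_apply, QuotientGroup.eq_one_iff]; exact h.2
      rw [this, mul_one]
    have hF : F (QuotientGroup.mk' N (g * ↑h)) = F (QuotientGroup.mk' N g) :=
      congrArg F hq
    show ρ _ (F (QuotientGroup.mk' N (g * ↑h))) = ρ h⁻¹ (ρ _ (F (QuotientGroup.mk' N g)))
    rw [hF]
    rw [key N ρ (⟨(ι (QuotientGroup.mk' N (g * ↑h)))⁻¹ * (g * ↑h), hmem N ι hι _⟩⁻¹)
      ((⟨(ι (QuotientGroup.mk' N g))⁻¹ * g, hmem N ι hι g⟩ : N) * h)⁻¹ (M_eq N ι hι g h hq)]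
    rw [mul_inv_rev, map_mul]
    rfl⟩
  map_add' F₁ F₂ := by ext x; simp
  map_smul' c F := by ext x; simp

lemma LM (hι : ∀ a, QuotientGroup.mk' N (ι a) = a) :
    (L N ρ ι).comp (M N ρ ι hι) = LinearMap.id := by
  ext F a
  show ρ (⟨(ι (QuotientGroup.mk' N (ι a)))⁻¹ * ι a, _⟩⁻¹) (F (QuotientGroup.mk' N (ι a))) = F a
  rw [key N ρ _ 1 (by push_cast; rw [hι]; group), map_one, hι]
  rfl

lemma ML (hι : ∀ a, QuotientGroup.mk' N (ι a) = a) :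
    (M N ρ ι hι).comp (L N ρ ι) = LinearMap.id := by
  ext f x
  show ρ (⟨(ι (QuotientGroup.mk' N x))⁻¹ * x, hmem N ι hι x⟩⁻¹)
      ((f : G → V) (ι (QuotientGroup.mk' N x))) = (f : G → V) x
  have := f.2 (ι (QuotientGroup.mk' N x)) ⟨(ι (QuotientGroup.mk' N x))⁻¹ * x, hmem N ι hι x⟩
  rw [← this]
  group

def e (hι : ∀ a, QuotientGroup.mk' N (ι a) = a) : indCar N ρ ≃ₗ[k] ((G ⧸ N) → V) :=
  LinearEquiv.ofLinear (L N ρ ι) (M N ρ ι hι) (LM N ρ ι hι) (ML N ρ ι hι)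

def σ (hι : ∀ a, QuotientGroup.mk' N (ι a) = a) :
    Representation k G ((G ⧸ N) → V) where
  toFun g := (e N ρ ι hι).toLinearMap ∘ₗ (indRep N ρ g) ∘ₗ (e N ρ ι hι).symm.toLinearMap
  map_one' := by
    ext F a
    simp [indRep]
  map_mul' g₁ g₂ := by
    ext F a
    simp [map_mul, Module.End.mul_apply]

lemma equiv_prop (hι : ∀ a, QuotientGroup.mk' N (ι a) = a) (g : G) (f : indCar N ρ) :
    e N ρ ι hι (indRep N ρ g f) = σ N ρ ι hι g (e N ρ ι hι f) := by
  simp [σ]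

end CliffordAux

/-- Let `N ⊴ G` of finite index, `A = G ⧸ N`, `ι` a section of the quotient with `ι 1 = 1`.
The map sending `f ∈ Ind_N^G V` to `∑_{a ∈ A} a ⊗ f (ι a)` — realized as the function
`A → V`, `a ↦ f (ι a)` — is an isomorphism of `G`-representations from `Ind_N^G V` onto
`k[A] ⊗ V` equipped with the twisted action `ι(a)g · (f ⊗ v) = af ⊗ ρ(γ(a,f)) ρ(ι(f)⁻¹gι(f)) v`
(whose closed form on `F : A → V` at `b` acts by `ι(b)⁻¹ x ι((π x)⁻¹ b) ∈ N` on `F((π x)⁻¹ b)`). -/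
theorem ind_iso_twisted_tensor {k G V : Type*} [Field k] [Group G] [AddCommGroup V]
    [Module k V] (N : Subgroup G) [N.Normal] [Finite (G ⧸ N)]
    (ρ : Representation k N V)
    (ι : G ⧸ N → G) (hι : ∀ a, QuotientGroup.mk' N (ι a) = a) (hι1 : ι 1 = 1) :
    ∃ σ : Representation k G ((G ⧸ N) → V),
      (∀ (x : G) (F : (G ⧸ N) → V) (b : G ⧸ N),
        σ x F b =
          ρ ⟨(ι b)⁻¹ * x * ι ((QuotientGroup.mk' N x)⁻¹ * b), by
              rw [← QuotientGroup.eq_one_iff]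
              show (QuotientGroup.mk' N) ((ι b)⁻¹ * x * ι ((QuotientGroup.mk' N x)⁻¹ * b)) = 1
              simp only [map_mul, map_inv, hι]
              group⟩
            (F ((QuotientGroup.mk' N x)⁻¹ * b))) ∧
      ∃ e : indCar N ρ ≃ₗ[k] ((G ⧸ N) → V),
        (∀ (f : indCar N ρ) (a : G ⧸ N), e f a = (f : G → V) (ι a)) ∧
        (∀ (g : G) (f : indCar N ρ), e (indRep N ρ g f) = σ g (e f)) := by
  refine ⟨CliffordAux.σ N ρ ι hι, ?_, CliffordAux.e N ρ ι hι, fun f a => rfl,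
    CliffordAux.equiv_prop N ρ ι hι⟩
  intro x F b
  have hqc : QuotientGroup.mk' N (x⁻¹ * ι b) = (QuotientGroup.mk' N x)⁻¹ * b := by
    rw [map_mul, map_inv, hι]
  show ρ (⟨(ι (QuotientGroup.mk' N (x⁻¹ * ι b)))⁻¹ * (x⁻¹ * ι b),
        CliffordAux.hmem N ι hι _⟩⁻¹) (F (QuotientGroup.mk' N (x⁻¹ * ι b))) = _
  have hF : F (QuotientGroup.mk' N (x⁻¹ * ι b)) = F ((QuotientGroup.mk' N x)⁻¹ * b) :=
    congrArg F hqc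
  rw [hF]
  rw [CliffordAux.key N ρ _ (⟨(ι b)⁻¹ * x * ι ((QuotientGroup.mk' N x)⁻¹ * b), by
      rw [← QuotientGroup.eq_one_iff]
      show (QuotientGroup.mk' N) ((ι b)⁻¹ * x * ι ((QuotientGroup.mk' N x)⁻¹ * b)) = 1
      simp only [map_mul, map_inv, hι]
      group⟩ : N) (by
    push_cast
    rw [hqc]
    group)]
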